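/- Every finite extensive game with perfect information is weakly acyclic: for every joint strategy s of the game there exists a finite improvement path (in the strategic form) starting at s. -/

import Mathlib

/-- A finite extensive game with perfect information: a finite rooted tree whose
leaves carry an outcome for each player and whose internal nodes carry the player
to move and a nonempty finite family of children. -/
inductive ExtGame (ι : Type) : Type where
  | leaf : (ι → ℝ) → ExtGame ι
  | node : ι → (m : ℕ) → (Fin (m + 1) → ExtGame ι) → ExtGame ι

namespace ExtGame

variable {ι : Type}

/-- A strategy of player `i`: at every node where it is `i`'s turn, a choice of a child. -/
def Strategy (i : ι) : ExtGame ι → Type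
  | .leaf _ => PUnit
  | .node j m children => (i = j → Fin (m + 1)) × ∀ c : Fin (m + 1), Strategy i (children c)

/-- The outcome (payoff vector) when every player follows his strategy. -/
def outcome : (G : ExtGame ι) → (∀ i, G.Strategy i) → ι → ℝ
  | .leaf o, _ => o
  | .node j _ children, σ =>
      outcome (children ((σ j).1 rfl)) (fun i => (σ i).2 ((σ j).1 rfl))

/-- Nodes of the game tree, identified by the path from the root. -/
inductive Node : ExtGame ι → Type where
  | root (G : ExtGame ι) : Node G
  | child {j : ι} {m : ℕ} {children : Fin (m + 1) → ExtGame ι}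
      (c : Fin (m + 1)) : Node (children c) → Node (.node j m children)

/-- The subgame rooted at a node. -/
def subgameAt : {G : ExtGame ι} → Node G → ExtGame ι
  | _, .root G => G
  | _, .child c v => subgameAt v

/-- The joint strategy of the subgame rooted at `v` induced by a joint strategy. -/
def restrictProfile : {G : ExtGame ι} → (∀ i, G.Strategy i) → (v : Node G) →
    ∀ i, (subgameAt v).Strategy i
  | _, σ, .root _ => σ
  | _, σ, .child c v => restrictProfile (fun i => (σ i).2 c) v

/-- Nash equilibrium of (the strategic form of) an extensive game. -/
def NashEq [DecidableEq ι] (G : ExtGame ι) (σ : ∀ i, G.Strategy i) : Prop :=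
  ∀ (i : ι) (t : G.Strategy i), G.outcome σ i ≥ G.outcome (Function.update σ i t) i

/-- Subgame perfect equilibrium: the induced joint strategy is a Nash equilibrium
in the subgame rooted at every node. -/
def SPE [DecidableEq ι] (G : ExtGame ι) (σ : ∀ i, G.Strategy i) : Prop :=
  ∀ v : Node G, (subgameAt v).NashEq (restrictProfile σ v)

/-- At the root (if it is a non-leaf), the player to move chooses a child whose
subgame outcome (under the induced strategies) is maximal for him. -/
def BestAtRoot : (G : ExtGame ι) → (∀ i, G.Strategy i) → Prop
  | .leaf _, _ => True
  | .node j _ children, σ =>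
      ∀ c, outcome (children ((σ j).1 rfl)) (fun i => (σ i).2 ((σ j).1 rfl)) j ≥
        outcome (children c) (fun i => (σ i).2 c) j

/-- The list of payoff vectors at the leaves of the game tree (one entry per leaf). -/
def leavesList : ExtGame ι → List (ι → ℝ)
  | .leaf o => [o]
  | .node _ _ children => (List.ofFn fun c => leavesList (children c)).flatten

/-- The game is without relevant ties: at every non-leaf node `u` with `turn(u) = i`,
the outcome function of player `i` is injective on the leaves of the subtree rooted at `u`. -/
def NoRelevantTies : ExtGame ι → Prop
  | .leaf _ => True
  | .node j m children =>
      ((ExtGame.node j m children).leavesList.Pairwise fun o o' => o j ≠ o' j) ∧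
      ∀ c, NoRelevantTies (children c)

/-- The player to move at a node (`none` if the node is a leaf). -/
def turnAt {G : ExtGame ι} (v : Node G) : Option ι :=
  match subgameAt v with
  | .leaf _ => none
  | .node j _ _ => some j

end ExtGame


/-- A profitable deviation in the strategic form of `G`: some player `i` changes only his
own strategy and strictly increases his payoff. -/
def ProfDev {n : ℕ} (G : ExtGame (Fin n)) (σ τ : ∀ j, G.Strategy j) : Prop :=
  ∃ i : Fin n, (∀ j, j ≠ i → τ j = σ j) ∧ G.outcome τ i > G.outcome σ i


open ExtGame in
section
variable {n : ℕ}

abbrev Prof (G : ExtGame (Fin n)) := ∀ i : Fin n, G.Strategy i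

def NoDev (G : ExtGame (Fin n)) (s : Prof G) : Prop := ¬ ∃ t, ProfDev G s t

lemma noDev_le {G : ExtGame (Fin n)} {s : Prof G} (h : NoDev G s) (i : Fin n)
    (t : G.Strategy i) : G.outcome (Function.update s i t) i ≤ G.outcome s i := by
  by_contra hlt
  push_neg at hlt
  exact h ⟨Function.update s i t, i, fun j hj => Function.update_of_ne hj _ _, hlt⟩

variable {j : Fin n} {m : ℕ} {ch : Fin (m+1) → ExtGame (Fin n)}

def rc (σ : Prof (ExtGame.node j m ch)) : Fin (m+1) := (σ j).1 rfl

def ins (c : Fin (m+1)) (σ : Prof (ExtGame.node j m ch)) : Prof (ch c) :=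
  fun i => (σ i).2 c

lemma outcome_node (σ : Prof (ExtGame.node j m ch)) :
    (ExtGame.node j m ch).outcome σ = (ch (rc σ)).outcome (ins (rc σ) σ) := rfl

def embed (σ : Prof (ExtGame.node j m ch)) (c : Fin (m+1)) (τ : Prof (ch c)) :
    Prof (ExtGame.node j m ch) :=
  fun i => ((σ i).1, Function.update (σ i).2 c (τ i))

lemma rc_embed (σ : Prof (ExtGame.node j m ch)) (c : Fin (m+1)) (τ : Prof (ch c)) :
    rc (embed σ c τ) = rc σ := rfl

lemma ins_embed_same (σ : Prof (ExtGame.node j m ch)) (c : Fin (m+1)) (τ : Prof (ch c)) :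
    ins c (embed σ c τ) = τ := by
  funext i
  exact Function.update_self _ _ _

lemma ins_embed_ne (σ : Prof (ExtGame.node j m ch)) {c c' : Fin (m+1)} (τ : Prof (ch c))
    (h : c' ≠ c) : ins c' (embed σ c τ) = ins c' σ := by
  funext i
  exact Function.update_of_ne h _ _

end

open ExtGame in
section
variable {n : ℕ} {j : Fin n} {m : ℕ} {ch : Fin (m+1) → ExtGame (Fin n)}

lemma outcome_embed (σ : Prof (ExtGame.node j m ch)) {c : Fin (m+1)} (hrc : rc σ = c)
    (τ : Prof (ch c)) :
    (ExtGame.node j m ch).outcome (embed σ c τ) = (ch c).outcome τ := by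
  subst hrc
  show (ch (rc σ)).outcome (ins (rc σ) (embed σ (rc σ) τ)) = (ch (rc σ)).outcome τ
  rw [ins_embed_same]

lemma embed_self (σ : Prof (ExtGame.node j m ch)) (c : Fin (m+1)) :
    embed σ c (ins c σ) = σ := by
  funext i
  show ((σ i).1, Function.update (σ i).2 c ((σ i).2 c)) = σ i
  rw [Function.update_eq_self]
  rfl

lemma lift_step (σ : Prof (ExtGame.node j m ch)) {c : Fin (m+1)} (hrc : rc σ = c)
    {τ₁ τ₂ : Prof (ch c)} (h : ProfDev (ch c) τ₁ τ₂) :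
    ProfDev (ExtGame.node j m ch) (embed σ c τ₁) (embed σ c τ₂) := by
  obtain ⟨i, hne, hgt⟩ := h
  refine ⟨i, fun j' hj' => ?_, ?_⟩
  · show ((σ j').1, Function.update (σ j').2 c (τ₂ j')) =
      ((σ j').1, Function.update (σ j').2 c (τ₁ j'))
    rw [hne j' hj']
  · rw [outcome_embed σ hrc, outcome_embed σ hrc]
    exact hgt

lemma lift (σ : Prof (ExtGame.node j m ch)) {c : Fin (m+1)} (hrc : rc σ = c)
    {τ : Prof (ch c)} (h : Relation.ReflTransGen (ProfDev (ch c)) (ins c σ) τ) :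
    Relation.ReflTransGen (ProfDev (ExtGame.node j m ch)) σ (embed σ c τ) := by
  induction h with
  | refl => rw [embed_self]
  | @tail b c' hab hbc ih => exact ih.tail (lift_step σ hrc hbc)

end

open ExtGame in
section
variable {n : ℕ} {j : Fin n} {m : ℕ} {ch : Fin (m+1) → ExtGame (Fin n)}

lemma outcome_rc (σ : Prof (ExtGame.node j m ch)) {c : Fin (m+1)} (h : rc σ = c) :
    (ExtGame.node j m ch).outcome σ = (ch c).outcome (ins c σ) := by
  subst h; rfl

lemma noDev_rc {σ : Prof (ExtGame.node j m ch)} {c : Fin (m+1)} (h : rc σ = c)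
    (hn : NoDev (ch c) (ins c σ)) : NoDev (ch (rc σ)) (ins (rc σ) σ) := by
  subst h; exact hn

/-- `j` switches the root choice to `c₀` and plays `t` inside `c₀`. -/
def setj (σ : Prof (ExtGame.node j m ch)) (c₀ : Fin (m+1)) (t : (ch c₀).Strategy j) :
    Prof (ExtGame.node j m ch) :=
  Function.update σ j
    ((fun _ => c₀, Function.update (σ j).2 c₀ t) : (ExtGame.node j m ch).Strategy j)

lemma setj_apply_ne (σ : Prof (ExtGame.node j m ch)) (c₀ : Fin (m+1))
    (t : (ch c₀).Strategy j) {j' : Fin n} (hj' : j' ≠ j) : setj σ c₀ t j' = σ j' :=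
  Function.update_of_ne hj' _ _

lemma rc_setj (σ : Prof (ExtGame.node j m ch)) (c₀ : Fin (m+1)) (t : (ch c₀).Strategy j) :
    rc (setj σ c₀ t) = c₀ := by
  show (Function.update σ j _ j).1 rfl = c₀
  erw [Function.update_self]

lemma ins_setj_same (σ : Prof (ExtGame.node j m ch)) (c₀ : Fin (m+1))
    (t : (ch c₀).Strategy j) : ins c₀ (setj σ c₀ t) = Function.update (ins c₀ σ) j t := by
  funext j'
  by_cases hj' : j' = j
  · subst hj'
    show (Function.update σ j' _ j').2 c₀ = _
    erw [Function.update_self, Function.update_self]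
    exact Function.update_self _ _ _
  · show (Function.update σ j _ j').2 c₀ = _
    erw [Function.update_of_ne hj', Function.update_of_ne hj']
    rfl

lemma ins_setj_ne (σ : Prof (ExtGame.node j m ch)) {c c₀ : Fin (m+1)}
    (t : (ch c₀).Strategy j) (hc : c ≠ c₀) : ins c (setj σ c₀ t) = ins c σ := by
  funext j'
  by_cases hj' : j' = j
  · subst hj'
    show (Function.update σ j' _ j').2 c = _
    erw [Function.update_self]
    exact Function.update_of_ne hc _ _
  · show (Function.update σ j _ j').2 c = _
    erw [Function.update_of_ne hj']
    rfl

lemma update_ins_eq {σ τ : Prof (ExtGame.node j m ch)} (h : ∀ j' , j' ≠ j → τ j' = σ j')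
    (c : Fin (m+1)) (t : (ch c).Strategy j) :
    Function.update (ins c τ) j t = Function.update (ins c σ) j t := by
  funext j'
  by_cases hj' : j' = j
  · subst hj'; rw [Function.update_self, Function.update_self]
  · rw [Function.update_of_ne hj', Function.update_of_ne hj']
    show (τ j').2 c = (σ j').2 c
    rw [h j' hj']

/-- Invariant at "stable" points of the improvement path construction. -/
def StInv (S : Finset (Fin (m+1))) (σ : Prof (ExtGame.node j m ch)) : Prop :=
  rc σ ∈ S ∧ NoDev (ch (rc σ)) (ins (rc σ) σ) ∧
  ∀ c ∈ S, ∀ t : (ch c).Strategy j,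
    (ch c).outcome (Function.update (ins c σ) j t) j ≤ (ExtGame.node j m ch).outcome σ j

lemma step
    (IH : ∀ c (s : Prof (ch c)), ∃ t, Relation.ReflTransGen (ProfDev (ch c)) s t ∧ NoDev (ch c) t)
    {S : Finset (Fin (m+1))} {σ : Prof (ExtGame.node j m ch)} (hInv : StInv S σ)
    (hdev : ∃ τ, ProfDev (ExtGame.node j m ch) σ τ) :
    ∃ c₁, c₁ ∉ S ∧ ∃ σ', Relation.ReflTransGen (ProfDev (ExtGame.node j m ch)) σ σ' ∧
      StInv (insert c₁ S) σ' := by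
  obtain ⟨hmem, hcur, hC⟩ := hInv
  obtain ⟨τ, i, hne, hgt⟩ := hdev
  by_cases hij : i = j
  case neg =>
    exfalso
    have hrcτ : rc τ = rc σ := by
      show (τ j).1 rfl = (σ j).1 rfl
      rw [hne j (fun h => hij h.symm)]
    have h1 : ins (rc σ) τ = Function.update (ins (rc σ) σ) i ((τ i).2 (rc σ)) := by
      funext j'
      by_cases hj' : j' = i
      · subst hj'; rw [Function.update_self]; rfl
      · rw [Function.update_of_ne hj']
        show (τ j').2 (rc σ) = (σ j').2 (rc σ)
        rw [hne j' hj']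
    have hle := noDev_le hcur i ((τ i).2 (rc σ))
    rw [← h1] at hle
    rw [outcome_rc τ hrcτ, outcome_node σ] at hgt
    exact absurd hgt (not_lt.2 hle)
  case pos =>
    rw [hij] at hne hgt
    by_cases hc₁ : rc τ ∈ S
    case pos =>
      exfalso
      have h1 : ins (rc τ) τ = Function.update (ins (rc τ) σ) j ((τ j).2 (rc τ)) := by
        funext j'
        by_cases hj' : j' = j
        · subst hj'; rw [Function.update_self]; rfl
        · rw [Function.update_of_ne hj']
          show (τ j').2 (rc τ) = (σ j').2 (rc τ)
          rw [hne j' hj']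
      have h2 := hC (rc τ) hc₁ ((τ j).2 (rc τ))
      rw [← h1] at h2
      rw [outcome_rc τ rfl] at hgt
      exact absurd hgt (not_lt.2 h2)
    case neg =>
      obtain ⟨t₁, hR₁, hN₁⟩ := IH (rc τ) (ins (rc τ) τ)
      refine ⟨rc τ, hc₁, ?_⟩
      have hstep1 : ProfDev (ExtGame.node j m ch) σ τ := ⟨j, hne, hgt⟩
      have hR₂ := lift τ (rfl : rc τ = rc τ) hR₁
      have hrcσ₂ : rc (embed τ (rc τ) t₁) = rc τ := rc_embed τ (rc τ) t₁
      have hinsσ₂ : ins (rc τ) (embed τ (rc τ) t₁) = t₁ := ins_embed_same τ (rc τ) t₁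
      have houtσ₂ : (ExtGame.node j m ch).outcome (embed τ (rc τ) t₁) = (ch (rc τ)).outcome t₁ :=
        outcome_embed τ rfl t₁
      have hcomp : ∀ c, c ≠ rc τ → ∀ t : (ch c).Strategy j,
          Function.update (ins c (embed τ (rc τ) t₁)) j t = Function.update (ins c σ) j t := by
        intro c hc t
        rw [ins_embed_ne τ t₁ hc]
        exact update_ins_eq hne c t
      by_cases hcase : (ExtGame.node j m ch).outcome σ j ≤ (ch (rc τ)).outcome t₁ j
      case pos =>
        refine ⟨embed τ (rc τ) t₁, (Relation.ReflTransGen.single hstep1).trans hR₂,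
          ?_, ?_, ?_⟩
        · rw [hrcσ₂]; exact Finset.mem_insert_self _ _
        · exact noDev_rc hrcσ₂ (by rw [hinsσ₂]; exact hN₁)
        · intro c hc t
          rw [houtσ₂]
          rcases Finset.mem_insert.1 hc with h | h
          · subst h
            rw [hinsσ₂]
            exact noDev_le hN₁ j t
          · rw [hcomp c (ne_of_mem_of_not_mem h hc₁) t]
            exact le_trans (hC c h t) hcase
      case neg =>
        push_neg at hcase
        have hc₀c₁ : rc σ ≠ rc τ := ne_of_mem_of_not_mem hmem hc₁
        set σ₂ := embed τ (rc τ) t₁ with hσ₂def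
        set σ₃ := setj σ₂ (rc σ) ((σ j).2 (rc σ)) with hσ₃def
        have hrcσ₃ : rc σ₃ = rc σ := rc_setj σ₂ (rc σ) _
        have hins₀ : ins (rc σ) σ₃ = ins (rc σ) σ := by
          rw [hσ₃def, ins_setj_same]
          rw [hσ₂def, ins_embed_ne τ t₁ hc₀c₁]
          rw [update_ins_eq hne]
          show Function.update (ins (rc σ) σ) j (ins (rc σ) σ j) = ins (rc σ) σ
          exact Function.update_eq_self _ _
        have hout₃ : (ExtGame.node j m ch).outcome σ₃ = (ExtGame.node j m ch).outcome σ := by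
          rw [outcome_rc σ₃ hrcσ₃, hins₀, outcome_node σ]
        have hstep3 : ProfDev (ExtGame.node j m ch) σ₂ σ₃ := by
          refine ⟨j, fun j' hj' => setj_apply_ne σ₂ (rc σ) _ hj', ?_⟩
          rw [hout₃, houtσ₂]
          exact hcase
        refine ⟨σ₃, ((Relation.ReflTransGen.single hstep1).trans hR₂).tail hstep3,
          ?_, ?_, ?_⟩
        · rw [hrcσ₃]; exact Finset.mem_insert_of_mem hmem
        · exact noDev_rc hrcσ₃ (by rw [hins₀]; exact hcur)
        · intro c hc t
          rw [hout₃]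
          have hupd : ∀ t' : (ch c).Strategy j,
              Function.update (ins c σ₃) j t' = Function.update (ins c σ₂) j t' := by
            intro t'
            exact update_ins_eq (fun j' hj' => setj_apply_ne σ₂ (rc σ) _ hj') c t'
          rcases Finset.mem_insert.1 hc with h | h
          · subst h
            rw [hupd t, hσ₂def, ins_embed_same]
            exact le_trans (noDev_le hN₁ j t) (le_of_lt hcase)
          · rw [hupd t, hσ₂def, hcomp c (ne_of_mem_of_not_mem h hc₁) t]
            exact hC c h t
end

open ExtGame in
section
variable {n : ℕ} {j : Fin n} {m : ℕ} {ch : Fin (m+1) → ExtGame (Fin n)}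

lemma drive
    (IH : ∀ c (s : Prof (ch c)), ∃ t, Relation.ReflTransGen (ProfDev (ch c)) s t ∧ NoDev (ch c) t)
    (k : ℕ) :
    ∀ (S : Finset (Fin (m+1))) (σ : Prof (ExtGame.node j m ch)), m + 1 ≤ S.card + k →
      StInv S σ →
      ∃ t, Relation.ReflTransGen (ProfDev (ExtGame.node j m ch)) σ t ∧
        NoDev (ExtGame.node j m ch) t := by
  induction k with
  | zero =>
    intro S σ hcard hInv
    by_cases h : ∃ τ, ProfDev (ExtGame.node j m ch) σ τ
    · obtain ⟨c₁, hc₁, -⟩ := step IH hInv h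
      exfalso
      apply hc₁
      have hS : S = Finset.univ := by
        apply Finset.eq_univ_of_card
        have := Finset.card_le_univ S
        simp only [Finset.card_univ, Fintype.card_fin] at this ⊢
        omega
      rw [hS]
      exact Finset.mem_univ c₁
    · exact ⟨σ, Relation.ReflTransGen.refl, h⟩
  | succ k ihk =>
    intro S σ hcard hInv
    by_cases h : ∃ τ, ProfDev (ExtGame.node j m ch) σ τ
    · obtain ⟨c₁, hc₁, σ', hR, hInv'⟩ := step IH hInv h
      obtain ⟨t, hR', hN⟩ := ihk (insert c₁ S) σ'
        (by rw [Finset.card_insert_of_notMem hc₁]; omega) hInv'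
      exact ⟨t, hR.trans hR', hN⟩
    · exact ⟨σ, Relation.ReflTransGen.refl, h⟩

end

open ExtGame in
theorem exists_improve {n : ℕ} (G : ExtGame (Fin n)) :
    ∀ s : Prof G, ∃ t, Relation.ReflTransGen (ProfDev G) s t ∧ NoDev G t := by
  induction G with
  | leaf o =>
    intro s
    refine ⟨s, Relation.ReflTransGen.refl, ?_⟩
    rintro ⟨τ, i, -, hgt⟩
    exact lt_irrefl _ hgt
  | node j m ch IH =>
    intro s
    obtain ⟨t₀, hR₀, hN₀⟩ := IH (rc s) (ins (rc s) s)
    have hlift := lift s rfl hR₀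
    have hInv : StInv {rc s} (embed s (rc s) t₀) := by
      refine ⟨?_, ?_, ?_⟩
      · rw [rc_embed]; exact Finset.mem_singleton_self _
      · exact noDev_rc (rc_embed s _ t₀) (by rw [ins_embed_same]; exact hN₀)
      · intro c hc t
        rw [Finset.mem_singleton] at hc; subst hc
        rw [ins_embed_same, outcome_embed s rfl]
        exact noDev_le hN₀ j t
    obtain ⟨t, hR, hN⟩ := drive IH (m+1) {rc s} (embed s (rc s) t₀)
      (by rw [Finset.card_singleton]; omega) hInv
    exact ⟨t, hlift.trans hR, hN⟩


/-- (Kukushkin) Every finite extensive game with perfect information is weakly acyclic: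
from every joint strategy `σ` there is a finite improvement path, i.e. a finite sequence of
profitable deviations starting at `σ` and ending in a joint strategy admitting no
profitable deviation. -/
theorem extGame_weaklyAcyclic {n : ℕ} (G : ExtGame (Fin n)) (σ : ∀ j, G.Strategy j) :
    ∃ (k : ℕ) (f : Fin (k + 1) → ∀ j, G.Strategy j),
      f 0 = σ ∧ (∀ m : Fin k, ProfDev G (f m.castSucc) (f m.succ)) ∧
      ¬ ∃ τ, ProfDev G (f (Fin.last k)) τ := by
  obtain ⟨t, hR, hN⟩ := exists_improve G σ
  induction hR using Relation.ReflTransGen.head_induction_on with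
  | refl => exact ⟨0, fun _ => t, rfl, fun m => m.elim0, hN⟩
  | @head a b hstep _ ih =>
    obtain ⟨k, f, hf0, hfs, hfl⟩ := ih
    refine ⟨k + 1, Fin.cases a f, ?_, ?_, ?_⟩
    · exact Fin.cases_zero ..
    · intro mm
      induction mm using Fin.cases with
      | zero =>
        show ProfDev G (Fin.cases a f (Fin.castSucc 0)) (Fin.cases a f (Fin.succ 0))
        rw [Fin.castSucc_zero, Fin.cases_zero, Fin.cases_succ, hf0]
        exact hstep
      | succ i =>
        show ProfDev G (Fin.cases a f (Fin.castSucc (Fin.succ i)))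
          (Fin.cases a f (Fin.succ (Fin.succ i)))
        rw [← Fin.succ_castSucc, Fin.cases_succ, Fin.cases_succ]
        exact hfs i
    · show ¬∃ τ, ProfDev G (Fin.cases a f (Fin.last (k+1))) τ
      rw [← Fin.succ_last, Fin.cases_succ]
      exact hfl
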